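/- Let H be a complex Hilbert space, r ≥ 2, and let A_0, …, A_{r-1} be pairwise commuting bounded self-adjoint operators on H. Suppose (u_n)_{n≥0} ⊆ H satisfies the recurrence u_{n+r} = A_0 u_{n+r-1} + A_1 u_{n+r-2} + ⋯ + A_{r-1} u_n for all n ≥ 0. Then for every n ≥ r, u_n = Σ_{s=0}^{r-1} ρ(n−s, r; A) W_s, where W_s := Σ_{j=s}^{r-1} A_j u_{s+r-1-j} for s = 0, …, r−1. -/

import Mathlib

open Finset

/-- The combinatorial operator coefficient `ρ(m, r; A)`: the sum, over multi-indices
`k = (k₀, …, k_{r-1}) ∈ ℤ₊ʳ` with `1·k₀ + 2·k₁ + ⋯ + r·k_{r-1} = m − r`, of the multinomial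
coefficient `(k₀+⋯+k_{r-1})! / (k₀!⋯k_{r-1}!)` times `A₀^{k₀} ⋯ A_{r-1}^{k_{r-1}}`,
with the convention `ρ(m, r; A) = 0` for `m < r` (and in particular `ρ(r, r; A) = 1`). -/
noncomputable def rho {R : Type*} [Ring R] (r : ℕ) (A : ℕ → R) (m : ℕ) : R :=
  if m < r then 0
  else ∑ k ∈ (Fintype.piFinset fun _ : Fin r => Finset.range (m - r + 1)).filter
      (fun k : Fin r → ℕ => ∑ j : Fin r, ((j : ℕ) + 1) * k j = m - r),
    (Nat.multinomial Finset.univ k : R) * (List.ofFn fun j : Fin r => A (j : ℕ) ^ k j).prod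

lemma mult_step {ι : Type*} [Fintype ι] [DecidableEq ι] (k : ι → ℕ) (j : ι) (hj : k j ≠ 0) :
    (∑ i, k i) * Nat.multinomial univ (Function.update k j (k j - 1))
      = k j * Nat.multinomial univ k := by
  set k' := Function.update k j (k j - 1) with hk'
  have hfact : (fun i => (k' i).factorial) = Function.update (fun i => (k i).factorial) j ((k j - 1).factorial) := by
    funext i
    rcases eq_or_ne i j with rfl | h
    · simp [hk']
    · simp [hk', Function.update_of_ne h]
  have hprod : ∏ i, (k i).factorial = k j * ∏ i, (k' i).factorial := by
    rw [hfact, Finset.prod_update_of_mem (Finset.mem_univ j), ← mul_assoc,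
      Nat.mul_factorial_pred hj, ← Finset.erase_eq]
    exact (Finset.mul_prod_erase univ (fun x => (k x).factorial) (Finset.mem_univ j)).symm
  have hsum : ∑ i, k i = (∑ i, k' i) + 1 := by
    have h1 : (fun i => k' i) = Function.update k j (k j - 1) := rfl
    have h2 : ∑ i, k' i = (k j - 1) + ∑ i ∈ univ.erase j, k i := by
      rw [h1, Finset.sum_update_of_mem (Finset.mem_univ j), ← Finset.erase_eq]
    have h3 : ∑ i, k i = k j + ∑ i ∈ univ.erase j, k i := by
      rw [Finset.add_sum_erase univ k (Finset.mem_univ j)]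
    omega
  have spec1 := Nat.multinomial_spec univ k'
  have spec2 := Nat.multinomial_spec univ k
  have hpos : 0 < ∏ i, (k i).factorial := Finset.prod_pos fun i _ => Nat.factorial_pos _
  apply Nat.eq_of_mul_eq_mul_left hpos
  calc (∏ i, (k i).factorial) * ((∑ i, k i) * Nat.multinomial univ k')
      = (∑ i, k i) * (k j * ((∏ i, (k' i).factorial) * Nat.multinomial univ k')) := by
        rw [hprod]; ring
    _ = k j * ((∑ i, k' i + 1) * (∑ i, k' i).factorial) := by rw [spec1, hsum]; ring
    _ = k j * (∑ i, k i).factorial := by rw [← Nat.factorial_succ, ← hsum]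
    _ = (∏ i, (k i).factorial) * (k j * Nat.multinomial univ k) := by rw [mul_left_comm, spec2]
lemma mult_pascal {ι : Type*} [Fintype ι] [DecidableEq ι] (k : ι → ℕ) (hk : 0 < ∑ i, k i) :
    ∑ j ∈ univ.filter (fun j => k j ≠ 0),
        Nat.multinomial univ (Function.update k j (k j - 1))
      = Nat.multinomial univ k := by
  apply Nat.eq_of_mul_eq_mul_left hk
  rw [Finset.mul_sum]
  calc ∑ j ∈ univ.filter (fun j => k j ≠ 0),
        (∑ i, k i) * Nat.multinomial univ (Function.update k j (k j - 1))
      = ∑ j ∈ univ.filter (fun j => k j ≠ 0), k j * Nat.multinomial univ k := by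
        apply Finset.sum_congr rfl
        intro j hj
        exact mult_step k j (Finset.mem_filter.mp hj).2
    _ = (∑ j ∈ univ.filter (fun j => k j ≠ 0), k j) * Nat.multinomial univ k := by
        rw [Finset.sum_mul]
    _ = (∑ i, k i) * Nat.multinomial univ k := by
        rw [Finset.sum_filter_ne_zero]
lemma sum_update_add {ι : Type*} [Fintype ι] [DecidableEq ι] (f : ι → ℕ) (j : ι) (v : ℕ) :
    (∑ i, Function.update f j v i) + f j = (∑ i, f i) + v := by
  rw [Finset.sum_update_of_mem (Finset.mem_univ j), ← Finset.erase_eq,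
    ← Finset.add_sum_erase univ f (Finset.mem_univ j)]
  omega
lemma wsum_update {r : ℕ} (k : Fin r → ℕ) (j : Fin r) (v : ℕ) :
    (∑ i : Fin r, ((i : ℕ) + 1) * Function.update k j v i) + ((j : ℕ) + 1) * k j
      = (∑ i : Fin r, ((i : ℕ) + 1) * k i) + ((j : ℕ) + 1) * v := by
  have h : (fun i : Fin r => ((i : ℕ) + 1) * Function.update k j v i)
      = Function.update (fun i : Fin r => ((i : ℕ) + 1) * k i) j (((j : ℕ) + 1) * v) := by
    funext i
    rcases eq_or_ne i j with rfl | h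
    · simp
    · simp [Function.update_of_ne h]
  rw [h]
  exact sum_update_add (fun i : Fin r => ((i : ℕ) + 1) * k i) j (((j : ℕ) + 1) * v)
def Sset (r d : ℕ) : Finset (Fin r → ℕ) :=
  (Fintype.piFinset fun _ : Fin r => Finset.range (d + 1)).filter
    (fun k : Fin r → ℕ => ∑ j : Fin r, ((j : ℕ) + 1) * k j = d)
lemma mem_Sset {r d : ℕ} {k : Fin r → ℕ} :
    k ∈ Sset r d ↔ (∀ i, k i ≤ d) ∧ ∑ j : Fin r, ((j : ℕ) + 1) * k j = d := by
  simp [Sset, Fintype.mem_piFinset, Nat.lt_succ_iff]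
lemma wterm_le {r d : ℕ} {k : Fin r → ℕ} (hk : k ∈ Sset r d) (j : Fin r) :
    ((j : ℕ) + 1) * k j ≤ d := by
  rcases mem_Sset.mp hk with ⟨-, hsum⟩
  calc ((j : ℕ) + 1) * k j ≤ ∑ i : Fin r, ((i : ℕ) + 1) * k i :=
        Finset.single_le_sum (f := fun i : Fin r => ((i : ℕ) + 1) * k i)
          (fun i _ => Nat.zero_le _) (Finset.mem_univ j)
    _ = d := hsum
lemma key_term {R : Type*} [CommRing R] (r : ℕ) (A : ℕ → R) (d : ℕ) (j : Fin r) :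
    (if (j : ℕ) + 1 ≤ d then
        A j * ∑ k ∈ Sset r (d - 1 - (j : ℕ)),
          (Nat.multinomial univ k : R) * ∏ i : Fin r, A (i : ℕ) ^ k i
      else 0)
      = ∑ k ∈ (Sset r d).filter (fun k => k j ≠ 0),
          (Nat.multinomial univ (Function.update k j (k j - 1)) : R)
            * ∏ i : Fin r, A (i : ℕ) ^ k i := by
  split_ifs with hj
  · rw [Finset.mul_sum]
    refine Finset.sum_nbij' (fun k => Function.update k j (k j + 1))
      (fun k => Function.update k j (k j - 1)) ?_ ?_ ?_ ?_ ?_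
    · -- forward membership
      intro k hk
      beta_reduce
      rcases mem_Sset.mp hk with ⟨hb, hsum⟩
      have hw := wsum_update k j (k j + 1)
      rw [Finset.mem_filter]
      refine ⟨mem_Sset.mpr ⟨?_, ?_⟩, ?_⟩
      · intro i
        rcases eq_or_ne i j with rfl | h
        · have := hb i
          simp only [Function.update_self]
          omega
        · rw [Function.update_of_ne h]
          have := hb i
          omega
      · have hmul : ((j : ℕ) + 1) * (k j + 1) = ((j : ℕ) + 1) * k j + ((j : ℕ) + 1) := by ring
        omega
      · simp
    · -- backward membership
      intro k hk
      beta_reduce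
      rcases Finset.mem_filter.mp hk with ⟨hk', hne⟩
      rcases mem_Sset.mp hk' with ⟨hb, hsum⟩
      have hw := wsum_update k j (k j - 1)
      have hle := wterm_le hk' j
      have hexp : ((j : ℕ) + 1) * k j = (j : ℕ) * k j + k j := by ring
      have hj1 : (j : ℕ) * 1 ≤ (j : ℕ) * k j :=
        Nat.mul_le_mul_left _ (Nat.one_le_iff_ne_zero.mpr hne)
      refine mem_Sset.mpr ⟨?_, ?_⟩
      · intro i
        rcases eq_or_ne i j with rfl | h
        · simp only [Function.update_self]
          omega
        · rw [Function.update_of_ne h]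
          have hi2 : ((i : ℕ) + 1) * k i + ((j : ℕ) + 1) * k j
              ≤ ∑ l : Fin r, ((l : ℕ) + 1) * k l := by
            rw [← Finset.add_sum_erase univ (fun l : Fin r => ((l : ℕ) + 1) * k l)
              (Finset.mem_univ j)]
            have : ((i : ℕ) + 1) * k i ≤ ∑ l ∈ univ.erase j, ((l : ℕ) + 1) * k l :=
              Finset.single_le_sum (f := fun l : Fin r => ((l : ℕ) + 1) * k l)
                (fun l _ => Nat.zero_le _) (Finset.mem_erase.mpr ⟨h, Finset.mem_univ i⟩)
            omega
          have hki : k i ≤ ((i : ℕ) + 1) * k i := Nat.le_mul_of_pos_left _ (Nat.succ_pos _)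
          omega
      · obtain ⟨t, ht⟩ : ∃ t, k j = t + 1 := ⟨k j - 1, by omega⟩
        have h4 : ((j : ℕ) + 1) * k j = ((j : ℕ) + 1) * t + ((j : ℕ) + 1) := by rw [ht]; ring
        have h5 : ((j : ℕ) + 1) * (k j - 1) = ((j : ℕ) + 1) * t := by rw [ht]; simp
        omega
    · -- left inverse
      intro k hk
      beta_reduce
      funext i
      rcases eq_or_ne i j with rfl | h
      · simp
      · simp [Function.update_of_ne h]
    · -- right inverse
      intro k hk
      have hne := (Finset.mem_filter.mp hk).2
      beta_reduce
      funext i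
      rcases eq_or_ne i j with rfl | h
      · simp only [Function.update_idem, Function.update_self]
        omega
      · simp [Function.update_of_ne h]
    · -- terms
      intro k hk
      have hupd : Function.update (Function.update k j (k j + 1)) j
          (Function.update k j (k j + 1) j - 1) = k := by
        funext i
        rcases eq_or_ne i j with rfl | h
        · simp
        · simp [Function.update_of_ne h]
      rw [hupd]
      have hprod : ∏ i : Fin r, A (i : ℕ) ^ Function.update k j (k j + 1) i
          = A (j : ℕ) * ∏ i : Fin r, A (i : ℕ) ^ k i := by
        have h1 : (fun i : Fin r => A (i : ℕ) ^ Function.update k j (k j + 1) i)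
            = Function.update (fun i : Fin r => A (i : ℕ) ^ k i) j (A (j : ℕ) ^ (k j + 1)) := by
          funext i
          rcases eq_or_ne i j with rfl | h
          · simp
          · simp [Function.update_of_ne h]
        rw [h1, Finset.prod_update_of_mem (Finset.mem_univ j), ← Finset.erase_eq,
          pow_succ, ← Finset.mul_prod_erase univ (fun i : Fin r => A (i : ℕ) ^ k i)
            (Finset.mem_univ j)]
        ring
      rw [hprod]
      ring
  · symm
    rw [Finset.filter_false_of_mem, Finset.sum_empty]
    intro k hk
    have h1 := wterm_le hk j
    simp only [ne_eq, not_not]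
    rcases Nat.eq_zero_or_pos (k j) with h2 | h2
    · exact h2
    · exfalso
      have h3 : ((j : ℕ) + 1) * 1 ≤ ((j : ℕ) + 1) * k j := Nat.mul_le_mul_left _ h2
      omega
lemma key {R : Type*} [CommRing R] (r : ℕ) (A : ℕ → R) (d : ℕ) (hd : 1 ≤ d) :
    ∑ k ∈ Sset r d, (Nat.multinomial univ k : R) * ∏ i : Fin r, A (i : ℕ) ^ k i
      = ∑ j : Fin r, (if (j : ℕ) + 1 ≤ d then
          A (j : ℕ) * ∑ k ∈ Sset r (d - 1 - (j : ℕ)),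
            (Nat.multinomial univ k : R) * ∏ i : Fin r, A (i : ℕ) ^ k i
        else 0) := by
  calc ∑ k ∈ Sset r d, (Nat.multinomial univ k : R) * ∏ i : Fin r, A (i : ℕ) ^ k i
      = ∑ k ∈ Sset r d, ∑ j ∈ univ.filter (fun j => k j ≠ 0),
          (Nat.multinomial univ (Function.update k j (k j - 1)) : R)
            * ∏ i : Fin r, A (i : ℕ) ^ k i := by
        refine Finset.sum_congr rfl fun k hk => ?_
        have hpos : 0 < ∑ i, k i := by
          rcases mem_Sset.mp hk with ⟨-, hsum⟩
          by_contra h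
          push_neg at h
          have h0 : ∀ i ∈ univ, k i = 0 :=
            (Finset.sum_eq_zero_iff).mp (Nat.le_zero.mp h)
          have : ∑ j : Fin r, ((j : ℕ) + 1) * k j = 0 :=
            Finset.sum_eq_zero fun i hi => by rw [h0 i hi, Nat.mul_zero]
          omega
        rw [← mult_pascal k hpos, Nat.cast_sum, Finset.sum_mul]
    _ = ∑ k ∈ Sset r d, ∑ j : Fin r, (if k j ≠ 0 then
          (Nat.multinomial univ (Function.update k j (k j - 1)) : R)
            * ∏ i : Fin r, A (i : ℕ) ^ k i else 0) := by
        refine Finset.sum_congr rfl fun k _ => ?_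
        rw [Finset.sum_filter]
    _ = ∑ j : Fin r, ∑ k ∈ Sset r d, (if k j ≠ 0 then
          (Nat.multinomial univ (Function.update k j (k j - 1)) : R)
            * ∏ i : Fin r, A (i : ℕ) ^ k i else 0) := Finset.sum_comm
    _ = ∑ j : Fin r, ∑ k ∈ (Sset r d).filter (fun k => k j ≠ 0),
          (Nat.multinomial univ (Function.update k j (k j - 1)) : R)
            * ∏ i : Fin r, A (i : ℕ) ^ k i := by
        refine Finset.sum_congr rfl fun j _ => ?_
        rw [Finset.sum_filter]
    _ = _ := by
        refine Finset.sum_congr rfl fun j _ => ?_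
        exact (key_term r A d j).symm
lemma rho_of_lt {R : Type*} [Ring R] {r m : ℕ} (A : ℕ → R) (h : m < r) : rho r A m = 0 := by
  rw [rho, if_pos h]
lemma rho_self {R : Type*} [Ring R] (r : ℕ) (A : ℕ → R) : rho r A r = 1 := by
  rw [rho, if_neg (lt_irrefl r), Nat.sub_self]
  have hset : (Fintype.piFinset fun _ : Fin r => Finset.range (0 + 1)).filter
      (fun k : Fin r → ℕ => ∑ j : Fin r, ((j : ℕ) + 1) * k j = 0)
      = {fun _ => 0} := by
    ext k
    simp only [Finset.mem_filter, Fintype.mem_piFinset, Finset.mem_range, Nat.lt_succ_iff,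
      Nat.le_zero, Finset.mem_singleton]
    constructor
    · rintro ⟨h, -⟩
      funext i
      exact h i
    · rintro rfl
      simp
  rw [hset, Finset.sum_singleton]
  simp [Nat.multinomial, List.ofFn_const]
lemma rho_congr {R : Type*} [Ring R] {r : ℕ} {A B : ℕ → R} (h : ∀ i < r, A i = B i) (m : ℕ) :
    rho r A m = rho r B m := by
  rw [rho, rho]
  split_ifs with hm
  · rfl
  · refine Finset.sum_congr rfl fun k _ => ?_
    exact congrArg _ (congrArg List.prod (congrArg List.ofFn
      (funext fun j => by rw [h j j.isLt])))
lemma rho_map {R S : Type*} [Ring R] [Ring S] (f : R →+* S) (r : ℕ) (A : ℕ → R) (m : ℕ) :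
    f (rho r A m) = rho r (fun i => f (A i)) m := by
  rw [rho, rho]
  split_ifs with hm
  · exact map_zero f
  · rw [map_sum]
    refine Finset.sum_congr rfl fun k _ => ?_
    rw [map_mul, map_natCast, map_list_prod, List.map_ofFn]
    exact congrArg _ (congrArg List.prod (congrArg List.ofFn
      (funext fun j => by simp [map_pow])))
lemma rho_eq_Sset {R : Type*} [CommRing R] {r m : ℕ} (A : ℕ → R) (hm : r ≤ m) :
    rho r A m = ∑ k ∈ Sset r (m - r),
      (Nat.multinomial univ k : R) * ∏ i : Fin r, A (i : ℕ) ^ k i := by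
  rw [rho, if_neg (by omega)]
  refine Finset.sum_congr rfl fun k _ => ?_
  rw [List.prod_ofFn]
lemma rho_rec_comm {R : Type*} [CommRing R] {r m : ℕ} (hr : 1 ≤ r) (hm : r + 1 ≤ m)
    (A : ℕ → R) :
    rho r A m = ∑ j ∈ Finset.range r, A j * rho r A (m - 1 - j) := by
  have hd : 1 ≤ m - r := by omega
  rw [rho_eq_Sset A (by omega), key r A (m - r) hd,
    ← Fin.sum_univ_eq_sum_range (fun j => A j * rho r A (m - 1 - j)) r]
  refine Finset.sum_congr rfl fun j _ => ?_
  by_cases hj : (j : ℕ) + 1 ≤ m - r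
  · rw [if_pos hj, rho_eq_Sset A (by omega : r ≤ m - 1 - (j : ℕ))]
    have : m - 1 - (j : ℕ) - r = m - r - 1 - (j : ℕ) := by omega
    rw [this]
  · rw [if_neg hj, rho_of_lt A (by omega : m - 1 - (j : ℕ) < r), mul_zero]
lemma rho_rec {R : Type*} [Ring R] {r m : ℕ} (hr : 1 ≤ r) (hm : r + 1 ≤ m)
    (A : ℕ → R) (hcomm : ∀ i < r, ∀ j < r, Commute (A i) (A j)) :
    rho r A m = ∑ j ∈ Finset.range r, A j * rho r A (m - 1 - j) := by
  set s : Set R := A '' Set.Iio r with hs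
  have hcomm' : ∀ x ∈ s, ∀ y ∈ s, x * y = y * x := by
    rintro x ⟨i, hi, rfl⟩ y ⟨j, hj, rfl⟩
    exact hcomm i hi j hj
  letI : CommRing (Subring.closure s) := Subring.closureCommRingOfComm hcomm'
  set A' : ℕ → Subring.closure s := fun i =>
    if h : i < r then ⟨A i, Subring.subset_closure ⟨i, h, rfl⟩⟩ else 0 with hA'
  have hAA' : ∀ i < r, (Subring.closure s).subtype (A' i) = A i := by
    intro i hi
    simp [hA', dif_pos hi]
  have hrho : ∀ n : ℕ, (Subring.closure s).subtype (rho r A' n) = rho r A n := by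
    intro n
    rw [rho_map]
    exact rho_congr (fun i hi => hAA' i hi) n
  rw [← hrho m, rho_rec_comm hr hm A', map_sum]
  refine Finset.sum_congr rfl fun j hj => ?_
  rw [map_mul, hrho, hAA' j (Finset.mem_range.mp hj)]

/-- Combinatorial formula for a vector-valued sequence in a complex Hilbert space satisfying
a linear recurrence `u_{n+r} = A₀ u_{n+r-1} + ⋯ + A_{r-1} u_n` with pairwise commuting bounded
self-adjoint operator coefficients. -/
theorem vector_recurrence_combinatorial_formula
    {H : Type*} [NormedAddCommGroup H] [InnerProductSpace ℂ H] [CompleteSpace H]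
    {r : ℕ} (hr : 2 ≤ r) (A : ℕ → H →L[ℂ] H)
    (hsa : ∀ i < r, IsSelfAdjoint (A i))
    (hcomm : ∀ i < r, ∀ j < r, Commute (A i) (A j))
    (u : ℕ → H)
    (hrec : ∀ n : ℕ, u (n + r) = ∑ j ∈ Finset.range r, A j (u (n + (r - 1 - j)))) :
    ∀ n : ℕ, r ≤ n →
      u n = ∑ s ∈ Finset.range r, rho r A (n - s)
        (∑ j ∈ Finset.Icc s (r - 1), A j (u (s + (r - 1 - j)))) := by

  have hr1 : 1 ≤ r := by omega
  set W : ℕ → H := fun s => ∑ j ∈ Finset.Icc s (r - 1), A j (u (s + (r - 1 - j))) with hW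
  intro n
  induction n using Nat.strong_induction_on with
  | _ n ih =>
    intro hn
    -- general recurrence for u in subtracted form
    have hu : ∀ m : ℕ, r < m → u m = ∑ j ∈ Finset.range r, A j (u (m - 1 - j)) := by
      intro m hm
      have h0 := hrec (m - r)
      have h1 : m - r + r = m := by omega
      rw [h1] at h0
      rw [h0]
      refine Finset.sum_congr rfl fun j hj => ?_
      have hj' : j < r := Finset.mem_range.mp hj
      have : m - r + (r - 1 - j) = m - 1 - j := by omega
      rw [this]
    rcases eq_or_lt_of_le hn with heq | hlt
    · -- base case n = r
      subst heq
      have hsum : ∑ s ∈ Finset.range r, rho r A (r - s) (W s) = W 0 := by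
        rw [Finset.sum_eq_single 0]
        · rw [Nat.sub_zero, rho_self, ContinuousLinearMap.one_apply]
        · intro s hs hs0
          rw [rho_of_lt A (by omega : r - s < r), ContinuousLinearMap.zero_apply]
        · intro h
          exact absurd (Finset.mem_range.mpr (by omega)) h
      rw [hsum]
      have hIcc : Finset.Icc 0 (r - 1) = Finset.range r := by
        ext x
        simp only [Finset.mem_Icc, Finset.mem_range]
        omega
      have := hrec 0
      simp only [Nat.zero_add] at this
      rw [hW]
      simp only [hIcc]
      rw [this]
      refine Finset.sum_congr rfl fun j hj => ?_
      rw [Nat.zero_add]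
    · -- inductive step n > r
      have hun := hu n hlt
      -- per-term decomposition of the LHS
      have hterm : ∀ j ∈ Finset.range r,
          A j (u (n - 1 - j)) = (∑ s ∈ Finset.range r,
              ((A j * rho r A (n - 1 - j - s)) : H →L[ℂ] H) (W s))
            + (if n - r ≤ j then A j (u (n - 1 - j)) else 0) := by
        intro j hj
        have hj' : j < r := Finset.mem_range.mp hj
        by_cases hcase : j < n - r
        · rw [if_neg (by omega), add_zero]
          have hih := ih (n - 1 - j) (by omega) (by omega)
          rw [hih, map_sum]
          refine Finset.sum_congr rfl fun s hs => ?_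
          rw [ContinuousLinearMap.mul_apply]
        · rw [if_pos (by omega)]
          have hz : ∀ s ∈ Finset.range r,
              ((A j * rho r A (n - 1 - j - s)) : H →L[ℂ] H) (W s) = 0 := by
            intro s hs
            rw [rho_of_lt A (by omega : n - 1 - j - s < r), mul_zero,
              ContinuousLinearMap.zero_apply]
          rw [Finset.sum_congr rfl hz, Finset.sum_const, smul_zero, zero_add]
      rw [Finset.sum_congr rfl hterm, Finset.sum_add_distrib] at hun
      -- the second piece is W (n - r) (or 0)
      have hpiece2 : ∑ j ∈ Finset.range r, (if n - r ≤ j then A j (u (n - 1 - j)) else 0)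
          = if n - r < r then W (n - r) else 0 := by
        rw [← Finset.sum_filter]
        have hfe : (Finset.range r).filter (fun j => n - r ≤ j) = Finset.Icc (n - r) (r - 1) := by
          ext x
          simp only [Finset.mem_filter, Finset.mem_range, Finset.mem_Icc]
          omega
        rw [hfe]
        by_cases hc : n - r < r
        · rw [if_pos hc, hW]
          refine Finset.sum_congr rfl fun j hj => ?_
          have hj' := Finset.mem_Icc.mp hj
          have : n - r + (r - 1 - j) = n - 1 - j := by omega
          rw [this]
        · rw [if_neg hc]
          rw [Finset.Icc_eq_empty (by omega), Finset.sum_empty]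
      rw [hpiece2] at hun
      -- the first piece
      have hpiece1 : ∑ j ∈ Finset.range r, ∑ s ∈ Finset.range r,
            ((A j * rho r A (n - 1 - j - s)) : H →L[ℂ] H) (W s)
          = ∑ s ∈ Finset.range r,
              (if s < n - r then rho r A (n - s) (W s) else 0) := by
        rw [Finset.sum_comm]
        refine Finset.sum_congr rfl fun s hs => ?_
        have hs' : s < r := Finset.mem_range.mp hs
        by_cases hc : s < n - r
        · rw [if_pos hc]
          have hsum : ∑ j ∈ Finset.range r,
                ((A j * rho r A (n - 1 - j - s)) : H →L[ℂ] H) (W s)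
              = ((∑ j ∈ Finset.range r, A j * rho r A (n - 1 - j - s)) : H →L[ℂ] H) (W s) := by
            rw [ContinuousLinearMap.sum_apply]
          rw [hsum]
          congr 1
          have hrec' := rho_rec (R := H →L[ℂ] H) hr1 (by omega : r + 1 ≤ n - s) A hcomm
          rw [hrec']
          refine Finset.sum_congr rfl fun j hj => ?_
          have : n - s - 1 - j = n - 1 - j - s := by omega
          rw [this]
        · rw [if_neg hc]
          refine Finset.sum_eq_zero fun j hj => ?_
          rw [rho_of_lt A (by omega : n - 1 - j - s < r), mul_zero,
            ContinuousLinearMap.zero_apply]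
      rw [hpiece1] at hun
      -- now compare with the target sum
      rw [hun]
      have htarget : ∀ s ∈ Finset.range r,
          rho r A (n - s) (W s)
            = (if s < n - r then rho r A (n - s) (W s) else 0)
              + (if s = n - r then W (n - r) else 0) := by
        intro s hs
        have hs' : s < r := Finset.mem_range.mp hs
        by_cases hc : s < n - r
        · rw [if_pos hc, if_neg (by omega), add_zero]
        · by_cases hc2 : s = n - r
          · rw [if_neg hc, if_pos hc2, zero_add, hc2]
            have : n - (n - r) = r := by omega
            rw [this, rho_self, ContinuousLinearMap.one_apply]
          · rw [if_neg hc, if_neg hc2, add_zero,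
              rho_of_lt A (by omega : n - s < r), ContinuousLinearMap.zero_apply]
      rw [Finset.sum_congr rfl htarget, Finset.sum_add_distrib, Finset.sum_ite_eq' (Finset.range r) (n - r)]
      simp [Finset.mem_range]
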